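/- Let τ = 𝟙₂/2 be the maximally mixed state on ℂ², and for each n ≥ 2 define ξ_n ∈ D((ℂ²)^{⊗n}) by: ξ_n = binom(n, n/2)^{−1} Σ_{x∈{0,1}^n, ‖x‖₁ = n/2} |x⟩⟨x| if n is even, and ξ_n = ξ_{n−1} ⊗ τ if n is odd. Then for every n ≥ 2 and every integer r with 1 ≤ r ≤ (n−1)/4, the state ξ_n is not a binom(n,r)-almost i.i.d. (MSR almost i.i.d.) state in τ. -/

import Mathlib

open scoped BigOperators ComplexOrder
open Filter Matrix

noncomputable section

namespace AlmostIID

/-- The trace norm `‖A‖₁ = Tr √(A†A)` of a square complex matrix. -/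
def traceNorm {m : Type*} [Fintype m] [DecidableEq m] (A : Matrix m m ℂ) : ℝ :=
  (((Matrix.posSemidef_conjTranspose_mul_self A).1.eigenvectorUnitary.1 *
      Matrix.diagonal ((fun x : ℝ => ((Real.sqrt x : ℝ) : ℂ)) ∘
        (Matrix.posSemidef_conjTranspose_mul_self A).1.eigenvalues) *
      (star (Matrix.posSemidef_conjTranspose_mul_self A).1.eigenvectorUnitary :
        Matrix m m ℂ)).trace).re

/-- A density matrix (state): positive semidefinite with unit trace. -/
def IsState {m : Type*} [Fintype m] (M : Matrix m m ℂ) : Prop :=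
  M.PosSemidef ∧ M.trace = 1

/-- The marginal (reduced density matrix) of an `n`-partite operator on the
coordinates in `I`, i.e. the partial trace over the complement of `I`. -/
def marginal {κ : Type*} [Fintype κ] {n : ℕ}
    (M : Matrix (Fin n → κ) (Fin n → κ) ℂ) (I : Finset (Fin n)) :
    Matrix ({i : Fin n // i ∈ I} → κ) ({i : Fin n // i ∈ I} → κ) ℂ :=
  fun a b => ∑ f : {i : Fin n // i ∉ I} → κ,
    M (fun i => if h : i ∈ I then a ⟨i, h⟩ else f ⟨i, h⟩)
      (fun i => if h : i ∈ I then b ⟨i, h⟩ else f ⟨i, h⟩)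

/-- The single-site reduced density matrix on the `i`-th tensor factor. -/
def siteMarginal {κ : Type*} [Fintype κ] {n : ℕ}
    (M : Matrix (Fin n → κ) (Fin n → κ) ℂ) (i : Fin n) : Matrix κ κ ℂ :=
  fun a b => ∑ f : {j : Fin n // j ≠ i} → κ,
    M (fun j => if h : j = i then a else f ⟨j, h⟩)
      (fun j => if h : j = i then b else f ⟨j, h⟩)

/-- The i.i.d. product state `ρ^{⊗ι}` on the tensor factors indexed by `ι`. -/
def iidOn {κ : Type*} (ι : Type*) [Fintype ι] (ρ : Matrix κ κ ℂ) :
    Matrix (ι → κ) (ι → κ) ℂ :=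
  fun a b => ∏ i, ρ (a i) (b i)

/-- The product state `φ 0 ⊗ φ 1 ⊗ ⋯`. -/
def prodState {κ : Type*} {ι : Type*} [Fintype ι] (φ : ι → Matrix κ κ ℂ) :
    Matrix (ι → κ) (ι → κ) ℂ :=
  fun a b => ∏ i, φ i (a i) (b i)

/-- The quantum Wasserstein norm of order 1 of a difference of states:
the minimum of `Σ cᵢ` over decompositions `X = Σ cᵢ (τ⁽ⁱ⁾ − η⁽ⁱ⁾)` with `cᵢ ≥ 0`,
`τ⁽ⁱ⁾, η⁽ⁱ⁾` states with equal partial traces over the `i`-th factor. -/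
def W1 {κ : Type*} [Fintype κ] [DecidableEq κ] {n : ℕ}
    (X : Matrix (Fin n → κ) (Fin n → κ) ℂ) : ℝ :=
  sInf { w : ℝ |
    ∃ (c : Fin n → ℝ) (τ η : Fin n → Matrix (Fin n → κ) (Fin n → κ) ℂ),
      (∀ i, 0 ≤ c i) ∧ (∀ i, IsState (τ i)) ∧ (∀ i, IsState (η i)) ∧
      (∀ i, marginal (τ i) ({i}ᶜ : Finset (Fin n)) = marginal (η i) ({i}ᶜ : Finset (Fin n))) ∧
      X = ∑ i, c i • (τ i - η i) ∧ w = ∑ i, c i }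

/-- The local variation norm. -/
def LV {κ : Type*} [Fintype κ] [DecidableEq κ] {n : ℕ}
    (X : Matrix (Fin n → κ) (Fin n → κ) ℂ) : ℝ :=
  (1/2) * ∑ k ∈ Finset.Icc 1 n, ((2:ℝ)^k)⁻¹ *
    (((n.choose k : ℝ))⁻¹ *
      ∑ I ∈ Finset.powersetCard k (Finset.univ : Finset (Fin n)),
        traceNorm (marginal X I))


/-- The action of the permutation unitary `U_π` on a vector of `K^{⊗n}`. -/
def permVec {κ : Type*} {n : ℕ} (π : Equiv.Perm (Fin n)) (v : (Fin n → κ) → ℂ) :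
    (Fin n → κ) → ℂ :=
  fun x => v (fun i => x (π i))

/-- The vector `|ψ⟩^{⊗(n−r)} ⊗ |ω⟩` in `K^{⊗n}`. -/
def baseVec {κ : Type*} [Fintype κ] (n r : ℕ) (hrn : r ≤ n)
    (ψ : κ → ℂ) (ω : (Fin r → κ) → ℂ) : (Fin n → κ) → ℂ :=
  fun x => (∏ i : Fin (n - r), ψ (x (Fin.castLE (Nat.sub_le n r) i))) *
    ω (fun j => x ⟨n - r + j.val, by have := j.isLt; omega⟩)

/-- The set `V^n_r(K, |ψ⟩) = {U_π(|ψ⟩^{⊗(n−r)} ⊗ |ω⟩) : π ∈ S_n, |ω⟩ a unit vector of K^{⊗r}}`. -/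
def Vset {κ : Type*} [Fintype κ] (n r : ℕ) (hrn : r ≤ n) (ψ : κ → ℂ) :
    Set ((Fin n → κ) → ℂ) :=
  { v | ∃ (π : Equiv.Perm (Fin n)) (ω : (Fin r → κ) → ℂ),
      (∑ y, Complex.normSq (ω y)) = 1 ∧ v = permVec π (baseVec n r hrn ψ ω) }

/-- The reduced state on `A` of the pure state on `A ⊗ E` with vector `ψ`. -/
def reducedA {dA dE : ℕ} (ψ : Fin dA × Fin dE → ℂ) : Matrix (Fin dA) (Fin dA) ℂ :=
  fun a b => ∑ e : Fin dE, ψ (a, e) * (starRingEnd ℂ) (ψ (b, e))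

/-- The partial trace over all the `E` factors of an operator on `(A ⊗ E)^{⊗n}`. -/
def traceOutE {dA dE n : ℕ}
    (Ω : Matrix (Fin n → Fin dA × Fin dE) (Fin n → Fin dA × Fin dE) ℂ) :
    Matrix (Fin n → Fin dA) (Fin n → Fin dA) ℂ :=
  fun x y => ∑ e : Fin n → Fin dE, Ω (fun i => (x i, e i)) (fun i => (y i, e i))

/-- `ρₙ` is a `(n,r)`-MSR almost i.i.d. state, witnessed by the purification `ψ` on
`H_A ⊗ H_E`: there is a permutation-invariant extension `Ω` on `(A ⊗ E)^{⊗n}` whose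
partial trace over the `E` factors is `ρₙ` and whose support lies in
`span V^n_r(H_A ⊗ H_E, |ψ⟩)`. -/
def IsMSRWitnessed {dA dE : ℕ} (n r : ℕ) (hrn : r ≤ n) (ψ : Fin dA × Fin dE → ℂ)
    (ρn : Matrix (Fin n → Fin dA) (Fin n → Fin dA) ℂ) : Prop :=
  ∃ Ω : Matrix (Fin n → Fin dA × Fin dE) (Fin n → Fin dA × Fin dE) ℂ,
    IsState Ω ∧
    ρn = traceOutE Ω ∧
    (∀ (π : Equiv.Perm (Fin n)) (x y : Fin n → Fin dA × Fin dE),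
      Ω (fun i => x (π i)) (fun i => y (π i)) = Ω x y) ∧
    LinearMap.range (Matrix.mulVecLin Ω) ≤ Submodule.span ℂ (Vset n r hrn ψ)

/-- For even `n`: the uniform mixture of computational-basis states of Hamming
weight `n/2`, as a diagonal state on `(ℂ²)^{⊗n}`. -/
def xiEven (n : ℕ) : Matrix (Fin n → Fin 2) (Fin n → Fin 2) ℂ :=
  Matrix.diagonal fun x =>
    if 2 * (∑ i, (x i : ℕ)) = n then ((n.choose (n / 2) : ℂ))⁻¹ else 0

/-- The state `ξₙ`: for even `n`, the uniform mixture of basis states of Hamming weight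
`n/2`; for odd `n`, `ξ_{n−1} ⊗ τ` where `τ = 𝟙₂/2`. -/
def xi : (n : ℕ) → Matrix (Fin n → Fin 2) (Fin n → Fin 2) ℂ
  | 0 => 1
  | (m + 1) =>
    if Even (m + 1) then xiEven (m + 1)
    else fun a b =>
      xiEven m (fun i => a i.castSucc) (fun i => b i.castSucc) *
        ((2 : ℂ))⁻¹ * (if a (Fin.last m) = b (Fin.last m) then 1 else 0)

/-- `ρₙ` is a `binom(n,r)`-almost i.i.d. (MSR almost i.i.d.) state in `ρ`: there exist
an environment `H_E = ℂ^{dE}`, a purification `ψ` of `ρ` on `H_A ⊗ H_E`, and a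
permutation-invariant extension of `ρₙ` supported in `span V^n_r(H_A ⊗ H_E, |ψ⟩)`. -/
def IsMSR {dA : ℕ} (n r : ℕ) (hrn : r ≤ n) (ρ : Matrix (Fin dA) (Fin dA) ℂ)
    (ρn : Matrix (Fin n → Fin dA) (Fin n → Fin dA) ℂ) : Prop :=
  ∃ (dE : ℕ) (ψ : Fin dA × Fin dE → ℂ),
    (∑ v, Complex.normSq (ψ v)) = 1 ∧ ρ = reducedA ψ ∧ IsMSRWitnessed n r hrn ψ ρn

section AuxiliaryLemmas
open Finset

section Aux
variable {κ : Type*} [Fintype κ] [DecidableEq κ] {n : ℕ}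

/-- Key reindexing lemma: summing `G (update s i a₀) (s i)` over all `s`. -/
lemma sum_update_eq' (a₀ : κ) {M : Type*} [AddCommMonoid M] (i : Fin n)
    (G : (Fin n → κ) → κ → M) :
    ∑ s : Fin n → κ, G (Function.update s i a₀) (s i)
      = ∑ t : Fin n → κ, if t i = a₀ then ∑ a : κ, G t a else 0 := by
  classical
  set e := Equiv.funSplitAt i κ with he
  have key1 : ∀ (p : κ × ({ j : Fin n // j ≠ i } → κ)), (e.symm p) i = p.1 := by
    intro p; simp [he, Equiv.funSplitAt, Equiv.piSplitAt]
  have key2 : ∀ (a a' : κ) (z : { j : Fin n // j ≠ i } → κ),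
      Function.update (e.symm (a, z)) i a' = e.symm (a', z) := by
    intro a a' z
    funext j
    by_cases hj : j = i
    · subst hj; simp [he, Equiv.funSplitAt, Equiv.piSplitAt]
    · simp [he, Function.update_of_ne hj, Equiv.funSplitAt, Equiv.piSplitAt, hj]
  rw [← Equiv.sum_comp e.symm (fun s => G (Function.update s i a₀) (s i)),
      ← Equiv.sum_comp e.symm (fun t => if t i = a₀ then ∑ a : κ, G t a else 0)]
  rw [Fintype.sum_prod_type, Fintype.sum_prod_type]
  simp only [key1, key2]
  rw [Finset.sum_comm]
  conv_rhs => rw [Finset.sum_comm]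
  refine Finset.sum_congr rfl (fun z _ => ?_)
  rw [Finset.sum_ite_eq' Finset.univ a₀ (fun a => ∑ b : κ, G (e.symm (a, z)) b)]
  simp

/-- Two-site version. -/
lemma sum_update2_eq (a₀ : κ) {M : Type*} [AddCommMonoid M] (i j : Fin n) (hij : i ≠ j)
    (G : (Fin n → κ) → κ → κ → M) :
    ∑ s : Fin n → κ, G (Function.update (Function.update s i a₀) j a₀) (s i) (s j)
      = ∑ u : Fin n → κ, if u i = a₀ ∧ u j = a₀ then ∑ a : κ, ∑ a' : κ, G u a a' else 0 := by
  classical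
  have step1 : ∀ s : Fin n → κ,
      G (Function.update (Function.update s i a₀) j a₀) (s i) (s j)
        = (fun (t : Fin n → κ) (a' : κ) => G (Function.update t i a₀) (t i) a')
            (Function.update s j a₀) (s j) := by
    intro s
    simp only
    rw [Function.update_comm hij.symm, Function.update_of_ne hij]
  calc ∑ s : Fin n → κ, G (Function.update (Function.update s i a₀) j a₀) (s i) (s j)
      = ∑ s : Fin n → κ, (fun (t : Fin n → κ) (a' : κ) => G (Function.update t i a₀) (t i) a')
            (Function.update s j a₀) (s j) := Finset.sum_congr rfl (fun s _ => step1 s)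
    _ = ∑ t : Fin n → κ, if t j = a₀ then ∑ a' : κ, G (Function.update t i a₀) (t i) a' else 0 :=
        sum_update_eq' a₀ j (fun t a' => G (Function.update t i a₀) (t i) a')
    _ = ∑ t : Fin n → κ, (fun (u : Fin n → κ) (a : κ) =>
          if u j = a₀ then ∑ a' : κ, G u a a' else 0) (Function.update t i a₀) (t i) := by
        refine Finset.sum_congr rfl (fun t _ => ?_)
        simp only
        rw [Function.update_of_ne hij.symm]
    _ = ∑ u : Fin n → κ, if u i = a₀ then
          (∑ a : κ, if u j = a₀ then ∑ a' : κ, G u a a' else 0) else 0 :=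
        sum_update_eq' a₀ i (fun u a => if u j = a₀ then ∑ a' : κ, G u a a' else 0)
    _ = ∑ u : Fin n → κ, if u i = a₀ ∧ u j = a₀ then ∑ a : κ, ∑ a' : κ, G u a a' else 0 := by
        refine Finset.sum_congr rfl (fun u _ => ?_)
        by_cases h1 : u i = a₀ <;> by_cases h2 : u j = a₀ <;> simp [h1, h2]

/-- Factorized sums with a vanishing site factor vanish. -/
lemma sum_eq_zero_of_site (b : κ) (i : Fin n) (f : κ → ℂ) (g F : (Fin n → κ) → ℂ)
    (hF : ∀ y, F y = f (y i) * g y)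
    (hg : ∀ y a, g (Function.update y i a) = g y)
    (hf : ∑ a : κ, f a = 0) : ∑ y : Fin n → κ, F y = 0 := by
  classical
  have : ∀ y : Fin n → κ, F y = (fun (t : Fin n → κ) (a : κ) => f a * g t)
      (Function.update y i b) (y i) := by
    intro y; simp only; rw [hg y b, ← hF y]
  rw [Finset.sum_congr rfl (fun y _ => this y),
      sum_update_eq' b i (fun t a => f a * g t)]
  apply Finset.sum_eq_zero
  intro t _
  by_cases ht : t i = b <;> simp [ht, ← Finset.sum_mul, hf]

/-- Number of non-`a₀` letters. -/
def wt (a₀ : κ) {n : ℕ} (s : Fin n → κ) : ℕ := (univ.filter fun i => s i ≠ a₀).card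

lemma wt_update_a₀ {a₀ : κ} {s : Fin n → κ} {i : Fin n} (h : s i ≠ a₀) :
    wt a₀ (Function.update s i a₀) + 1 = wt a₀ s := by
  classical
  unfold wt
  have hset : (univ.filter fun j => Function.update s i a₀ j ≠ a₀)
      = (univ.filter fun j => s j ≠ a₀).erase i := by
    ext j
    by_cases hj : j = i
    · subst hj; simp
    · simp [Function.update_of_ne hj, hj]
  rw [hset, Finset.card_erase_add_one (by simp [h])]

lemma wt_update_ne {a₀ a : κ} {s : Fin n → κ} {i : Fin n} (ha : a ≠ a₀) (h : s i ≠ a₀) :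
    wt a₀ (Function.update s i a) = wt a₀ s := by
  classical
  unfold wt
  congr 1
  ext j
  by_cases hj : j = i
  · subst hj; simp [ha, h]
  · simp [Function.update_of_ne hj]

lemma wt_update_of_eq {a₀ a : κ} {s : Fin n → κ} {i : Fin n} (ha : a ≠ a₀) (h : s i = a₀) :
    wt a₀ (Function.update s i a) = wt a₀ s + 1 := by
  classical
  unfold wt
  have hset : (univ.filter fun j => Function.update s i a j ≠ a₀)
      = insert i (univ.filter fun j => s j ≠ a₀) := by
    ext j
    by_cases hj : j = i
    · subst hj; simp [ha]
    · simp [Function.update_of_ne hj, hj]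
  rw [hset, Finset.card_insert_of_notMem (by simp [h])]

lemma wt_comp_perm (a₀ : κ) (π : Equiv.Perm (Fin n)) (s : Fin n → κ) :
    wt a₀ (fun i => s (π i)) = wt a₀ s := by
  classical
  unfold wt
  apply Finset.card_bij (fun i _ => π i)
  · intro i hi; simp only [mem_filter, mem_univ, true_and] at hi ⊢; exact hi
  · intro i _ j _ hij; exact π.injective hij
  · intro j hj
    refine ⟨π.symm j, ?_, by simp⟩
    simp only [mem_filter, mem_univ, true_and] at hj ⊢
    simpa using hj

lemma filter_card_le_wt (a₀ : κ) (J : Finset (Fin n)) (s : Fin n → κ) :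
    (J.filter fun i => s i ≠ a₀).card ≤ wt a₀ s :=
  Finset.card_le_card (Finset.filter_subset_filter _ (Finset.subset_univ J))

end Aux

section Bridge1
variable {κ : Type*} [Fintype κ] [DecidableEq κ] {n : ℕ}

lemma fin_filter_lt_card (n m : ℕ) (hm : m ≤ n) :
    ((univ : Finset (Fin n)).filter fun i : Fin n => (i : ℕ) < m).card = m := by
  classical
  have h : ((univ : Finset (Fin n)).filter fun i : Fin n => (i : ℕ) < m).card
      = (Finset.range m).card := by
    apply Finset.card_bij (fun (i : Fin n) _ => (i : ℕ))
    · intro i hi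
      simp only [mem_filter] at hi
      simpa using hi.2
    · intro i hi j hj hij
      exact Fin.ext hij
    · intro j hj
      simp only [Finset.mem_range] at hj
      exact ⟨⟨j, lt_of_lt_of_le hj hm⟩, by simp [hj], rfl⟩
  simpa using h

lemma prod_ite_eq_fun (x y : Fin n → κ) :
    (∏ i, if x i = y i then (1:ℂ) else 0) = if x = y then 1 else 0 := by
  by_cases h : x = y
  · subst h; simp
  · rw [if_neg h]
    obtain ⟨i, hi⟩ := Function.ne_iff.mp h
    exact Finset.prod_eq_zero (mem_univ i) (by simp [hi])

/-- Inversion: a vector is recovered from its coefficients. -/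
lemma hat_inversion (B : κ → κ → ℂ)
    (hB2 : ∀ c c', ∑ a : κ, B a c * (starRingEnd ℂ) (B a c') = if c = c' then 1 else 0)
    (v : (Fin n → κ) → ℂ) (x : Fin n → κ) :
    ∑ s : Fin n → κ, (∏ i, B (s i) (x i)) *
      (∑ y : Fin n → κ, (∏ i, (starRingEnd ℂ) (B (s i) (y i))) * v y) = v x := by
  classical
  have h1 : ∀ s : Fin n → κ, (∏ i, B (s i) (x i)) *
      (∑ y : Fin n → κ, (∏ i, (starRingEnd ℂ) (B (s i) (y i))) * v y)
      = ∑ y : Fin n → κ, (∏ i, B (s i) (x i) * (starRingEnd ℂ) (B (s i) (y i))) * v y := by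
    intro s
    rw [Finset.mul_sum]
    refine Finset.sum_congr rfl (fun y _ => ?_)
    rw [← mul_assoc, ← Finset.prod_mul_distrib]
  rw [Finset.sum_congr rfl (fun s _ => h1 s), Finset.sum_comm]
  have h2 : ∀ y : Fin n → κ,
      ∑ s : Fin n → κ, (∏ i, B (s i) (x i) * (starRingEnd ℂ) (B (s i) (y i))) * v y
      = (if x = y then 1 else 0) * v y := by
    intro y
    rw [← Finset.sum_mul]
    congr 1
    rw [← Fintype.prod_sum (fun i a => B a (x i) * (starRingEnd ℂ) (B a (y i)))]
    rw [Finset.prod_congr rfl (fun i _ => hB2 (x i) (y i))]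
    exact prod_ite_eq_fun x y
  rw [Finset.sum_congr rfl (fun y _ => h2 y)]
  simp

/-- Computation of the hat transform of a "site multiplication" operator. -/
lemma hat_mult (B : κ → κ → ℂ)
    (hB2 : ∀ c c', ∑ a : κ, B a c * (starRingEnd ℂ) (B a c') = if c = c' then 1 else 0)
    (z : κ → ℂ) (J : Finset (Fin n)) (v : (Fin n → κ) → ℂ) (s : Fin n → κ) :
    ∑ i ∈ J, ∑ a : κ,
      (∑ cc : κ, (starRingEnd ℂ) (B (s i) cc) * z cc * B a cc) *
        (∑ x : Fin n → κ, (∏ l, (starRingEnd ℂ) (B (Function.update s i a l) (x l))) * v x)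
    = ∑ x : Fin n → κ, (∏ l, (starRingEnd ℂ) (B (s l) (x l))) * ((∑ i ∈ J, z (x i)) * v x) := by
  classical
  have key : ∀ i : Fin n, ∑ a : κ,
      (∑ cc : κ, (starRingEnd ℂ) (B (s i) cc) * z cc * B a cc) *
        (∑ x : Fin n → κ, (∏ l, (starRingEnd ℂ) (B (Function.update s i a l) (x l))) * v x)
      = ∑ x : Fin n → κ, (∏ l, (starRingEnd ℂ) (B (s l) (x l))) * (z (x i) * v x) := by
    intro i
    have hsplit : ∀ (a : κ) (x : Fin n → κ),
        (∏ l, (starRingEnd ℂ) (B (Function.update s i a l) (x l)))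
        = (starRingEnd ℂ) (B a (x i)) *
            ∏ l ∈ univ.erase i, (starRingEnd ℂ) (B (s l) (x l)) := by
      intro a x
      rw [← Finset.mul_prod_erase univ _ (mem_univ i)]
      congr 1
      · rw [Function.update_self]
      · refine Finset.prod_congr rfl (fun l hl => ?_)
        rw [Function.update_of_ne (Finset.ne_of_mem_erase hl)]
    have hsplit2 : ∀ x : Fin n → κ,
        (∏ l, (starRingEnd ℂ) (B (s l) (x l)))
        = (starRingEnd ℂ) (B (s i) (x i)) *
            ∏ l ∈ univ.erase i, (starRingEnd ℂ) (B (s l) (x l)) := by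
      intro x
      rw [← Finset.mul_prod_erase univ _ (mem_univ i)]
    have hinner : ∀ x : Fin n → κ, ∑ a : κ, ∑ cc : κ,
        (starRingEnd ℂ) (B (s i) cc) * z cc * (B a cc * (starRingEnd ℂ) (B a (x i)))
        = (starRingEnd ℂ) (B (s i) (x i)) * z (x i) := by
      intro x
      rw [Finset.sum_comm]
      have h3 : ∀ cc : κ, ∑ a : κ,
          (starRingEnd ℂ) (B (s i) cc) * z cc * (B a cc * (starRingEnd ℂ) (B a (x i)))
          = (if cc = x i then (starRingEnd ℂ) (B (s i) cc) * z cc else 0) := by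
        intro cc
        rw [← Finset.mul_sum, hB2 cc (x i)]
        by_cases h : cc = x i <;> simp [h]
      rw [Finset.sum_congr rfl (fun cc _ => h3 cc),
        Finset.sum_ite_eq' univ (x i) (fun cc => (starRingEnd ℂ) (B (s i) cc) * z cc)]
      simp
    calc ∑ a : κ, (∑ cc : κ, (starRingEnd ℂ) (B (s i) cc) * z cc * B a cc) *
          (∑ x : Fin n → κ, (∏ l, (starRingEnd ℂ) (B (Function.update s i a l) (x l))) * v x)
        = ∑ a : κ, ∑ x : Fin n → κ, (∑ cc : κ,
            (starRingEnd ℂ) (B (s i) cc) * z cc * (B a cc * (starRingEnd ℂ) (B a (x i)))) *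
            ((∏ l ∈ univ.erase i, (starRingEnd ℂ) (B (s l) (x l))) * v x) := by
          refine Finset.sum_congr rfl (fun a _ => ?_)
          rw [Finset.mul_sum]
          refine Finset.sum_congr rfl (fun x _ => ?_)
          rw [hsplit a x, Finset.sum_mul, Finset.sum_mul]
          refine Finset.sum_congr rfl (fun cc _ => ?_)
          ring
      _ = ∑ x : Fin n → κ, ∑ a : κ, (∑ cc : κ,
            (starRingEnd ℂ) (B (s i) cc) * z cc * (B a cc * (starRingEnd ℂ) (B a (x i)))) *
            ((∏ l ∈ univ.erase i, (starRingEnd ℂ) (B (s l) (x l))) * v x) := Finset.sum_comm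
      _ = ∑ x : Fin n → κ, (∏ l, (starRingEnd ℂ) (B (s l) (x l))) * (z (x i) * v x) := by
          refine Finset.sum_congr rfl (fun x _ => ?_)
          rw [← Finset.sum_mul, hinner x, hsplit2 x]
          ring
  rw [Finset.sum_congr rfl (fun i (_ : i ∈ J) => key i)]
  rw [Finset.sum_comm]
  refine Finset.sum_congr rfl (fun x _ => ?_)
  conv_rhs => rw [Finset.sum_mul, Finset.mul_sum]


variable {r : ℕ}

/-- The hat transform of a base vector vanishes at weights `> r`. -/
lemma hat_base (hrn : r ≤ n) (ψ : κ → ℂ) (B : κ → κ → ℂ) (a₀ : κ) (hBa₀ : B a₀ = ψ)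
    (hB1 : ∀ a a', ∑ cc : κ, (starRingEnd ℂ) (B a cc) * B a' cc = if a = a' then 1 else 0)
    (ω : (Fin r → κ) → ℂ) (t : Fin n → κ) (ht : r < wt a₀ t) :
    ∑ y : Fin n → κ, (∏ i, (starRingEnd ℂ) (B (t i) (y i))) * baseVec n r hrn ψ ω y = 0 := by
  classical
  -- find a small index with non-trivial letter
  have hex : ∃ i₁ : Fin n, (i₁ : ℕ) < n - r ∧ t i₁ ≠ a₀ := by
    by_contra hcon
    push_neg at hcon
    have hsub : (univ.filter fun i : Fin n => t i ≠ a₀)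
        ⊆ (univ.filter fun i : Fin n => ¬ ((i : ℕ) < n - r)) := by
      intro i hi
      simp only [mem_filter, mem_univ, true_and] at hi ⊢
      intro hlt
      exact hi (hcon i hlt)
    have hcard1 : ((univ : Finset (Fin n)).filter fun i : Fin n => ¬ ((i : ℕ) < n - r)).card
        = r := by
      have h1 := Finset.card_filter_add_card_filter_not
        (s := (univ : Finset (Fin n))) (p := fun i : Fin n => (i : ℕ) < n - r)
      have h2 := fin_filter_lt_card n (n - r) (Nat.sub_le n r)
      have h3 : (univ : Finset (Fin n)).card = n := by simp
      have hrn' : r < n := by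
        have : wt a₀ t ≤ n := by
          have := Finset.card_le_card (Finset.subset_univ
            (univ.filter fun i : Fin n => t i ≠ a₀))
          simpa [wt] using this
        omega
      omega
    have := Finset.card_le_card hsub
    rw [hcard1] at this
    have : wt a₀ t ≤ r := this
    omega
  obtain ⟨i₁, hi₁lt, hi₁ne⟩ := hex
  set i₂₁ : Fin (n - r) := ⟨(i₁ : ℕ), hi₁lt⟩ with hi₂₁
  have hcast : Fin.castLE (Nat.sub_le n r) i₂₁ = i₁ := by
    apply Fin.ext; simp [hi₂₁]
  apply sum_eq_zero_of_site a₀ i₁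
    (f := fun c => (starRingEnd ℂ) (B (t i₁) c) * ψ c)
    (g := fun y => (∏ i ∈ univ.erase i₁, (starRingEnd ℂ) (B (t i) (y i))) *
      ((∏ i₂ ∈ univ.erase i₂₁, ψ (y (Fin.castLE (Nat.sub_le n r) i₂))) *
        ω (fun j => y ⟨n - r + j.val, by have := j.isLt; omega⟩)))
  · -- factorization
    intro y
    unfold baseVec
    rw [← Finset.mul_prod_erase univ (fun i => (starRingEnd ℂ) (B (t i) (y i))) (mem_univ i₁),
        ← Finset.mul_prod_erase univ
          (fun i₂ => ψ (y (Fin.castLE (Nat.sub_le n r) i₂))) (mem_univ i₂₁), hcast]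
    ring
  · -- invariance of g under updates at i₁
    intro y a
    have h1 : ∀ i ∈ univ.erase i₁, (starRingEnd ℂ) (B (t i) (Function.update y i₁ a i))
        = (starRingEnd ℂ) (B (t i) (y i)) := by
      intro i hi
      rw [Function.update_of_ne (Finset.ne_of_mem_erase hi)]
    have h2 : ∀ i₂ ∈ univ.erase i₂₁, ψ (Function.update y i₁ a (Fin.castLE (Nat.sub_le n r) i₂))
        = ψ (y (Fin.castLE (Nat.sub_le n r) i₂)) := by
      intro i₂ hi₂
      have hne : Fin.castLE (Nat.sub_le n r) i₂ ≠ i₁ := by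
        intro hh
        apply Finset.ne_of_mem_erase hi₂
        apply Fin.ext
        have := congrArg Fin.val hh
        simp at this
        simp [hi₂₁, this]
      rw [Function.update_of_ne hne]
    have h3 : (fun j : Fin r => Function.update y i₁ a ⟨n - r + j.val, by have := j.isLt; omega⟩)
        = (fun j : Fin r => y ⟨n - r + j.val, by have := j.isLt; omega⟩) := by
      funext j
      have hne : (⟨n - r + j.val, by have := j.isLt; omega⟩ : Fin n) ≠ i₁ := by
        intro hh
        have := congrArg Fin.val hh
        simp at this
        omega
      rw [Function.update_of_ne hne]
    rw [Finset.prod_congr rfl h1, Finset.prod_congr rfl h2, h3]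
  · -- the site sum vanishes
    rw [← hBa₀]
    rw [hB1 (t i₁) a₀]
    simp [hi₁ne]

/-- Hat transform of any element of the span of `Vset` vanishes at weights `> r`. -/
lemma hat_span_support (hrn : r ≤ n) (ψ : κ → ℂ) (B : κ → κ → ℂ) (a₀ : κ) (hBa₀ : B a₀ = ψ)
    (hB1 : ∀ a a', ∑ cc : κ, (starRingEnd ℂ) (B a cc) * B a' cc = if a = a' then 1 else 0)
    (v : (Fin n → κ) → ℂ) (hv : v ∈ Submodule.span ℂ (Vset n r hrn ψ))
    (s : Fin n → κ) (hs : r < wt a₀ s) :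
    ∑ x : Fin n → κ, (∏ i, (starRingEnd ℂ) (B (s i) (x i))) * v x = 0 := by
  classical
  induction hv using Submodule.span_induction generalizing s with
  | mem u hu =>
    obtain ⟨π, ω, hω, rfl⟩ := hu
    -- permutation reindexing
    have hperm : ∑ x : Fin n → κ, (∏ i, (starRingEnd ℂ) (B (s i) (x i)))
          * permVec π (baseVec n r hrn ψ ω) x
        = ∑ y : Fin n → κ, (∏ i, (starRingEnd ℂ) (B (s (π i)) (y i)))
          * baseVec n r hrn ψ ω y := by
      set e : (Fin n → κ) ≃ (Fin n → κ) := Equiv.arrowCongr π (Equiv.refl κ) with he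
      refine (Fintype.sum_bijective e e.bijective _ _ ?_).symm
      intro y
      have harg : (fun i => (e y) (π i)) = y := by
        funext i
        simp [he, Equiv.arrowCongr]
      have hprod : ∏ i, (starRingEnd ℂ) (B (s (π i)) (y i))
          = ∏ i, (starRingEnd ℂ) (B (s i) ((e y) i)) := by
        rw [← Equiv.prod_comp π (fun i => (starRingEnd ℂ) (B (s i) ((e y) i)))]
        refine Finset.prod_congr rfl (fun i _ => ?_)
        congr 1
        simp [he, Equiv.arrowCongr]
      rw [hprod]
      unfold permVec
      rw [harg]
    rw [hperm]
    exact hat_base hrn ψ B a₀ hBa₀ hB1 ω (fun i => s (π i))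
      (by rw [wt_comp_perm a₀ π s]; exact hs)
  | zero => simp
  | add u u' _ _ hu hu' =>
    have : ∀ x : Fin n → κ, (∏ i, (starRingEnd ℂ) (B (s i) (x i))) * (u + u') x
        = (∏ i, (starRingEnd ℂ) (B (s i) (x i))) * u x
          + (∏ i, (starRingEnd ℂ) (B (s i) (x i))) * u' x := by
      intro x; simp [mul_add]
    rw [Finset.sum_congr rfl (fun x _ => this x), Finset.sum_add_distrib,
        hu s hs, hu' s hs, add_zero]
  | smul a u _ hu =>
    have : ∀ x : Fin n → κ, (∏ i, (starRingEnd ℂ) (B (s i) (x i))) * (a • u) x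
        = a * ((∏ i, (starRingEnd ℂ) (B (s i) (x i))) * u x) := by
      intro x; simp; ring
    rw [Finset.sum_congr rfl (fun x _ => this x), ← Finset.mul_sum, hu s hs, mul_zero]


end Bridge1

/-- Extension of a unit vector to an orthonormal basis, in coordinates. -/
lemma exists_onb {κ : Type*} [Fintype κ] [DecidableEq κ] [Nonempty κ] (ψ : κ → ℂ)
    (hψ : ∑ c, Complex.normSq (ψ c) = 1) (a₀ : κ) :
    ∃ B : κ → κ → ℂ, B a₀ = ψ ∧
      (∀ a a', ∑ cc : κ, (starRingEnd ℂ) (B a cc) * B a' cc = if a = a' then 1 else 0) ∧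
      (∀ c c', ∑ a : κ, B a c * (starRingEnd ℂ) (B a c') = if c = c' then 1 else 0) := by
  classical
  set E := EuclideanSpace ℂ κ
  set ψ' : E := (WithLp.equiv 2 (κ → ℂ)).symm ψ with hψ'
  have hψapp : ∀ c, ψ' c = ψ c := fun c => rfl
  have hnorm : ‖ψ'‖ = 1 := by
    rw [EuclideanSpace.norm_eq]
    have : ∀ c, ‖ψ' c‖ ^ 2 = Complex.normSq (ψ c) := by
      intro c
      rw [hψapp, ← Complex.sq_norm]
    rw [Finset.sum_congr rfl (fun c _ => this c), hψ, Real.sqrt_one]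
  have horth : Orthonormal ℂ (Set.restrict {a₀} (fun _ : κ => ψ')) := by
    constructor
    · intro i
      exact hnorm
    · intro i j hij
      exfalso
      apply hij
      apply Subtype.ext
      have hi := i.2
      have hj := j.2
      simp only [Set.mem_singleton_iff] at hi hj
      rw [hi, hj]
  obtain ⟨b, hb⟩ := horth.exists_orthonormalBasis_extension_of_card_eq
    (finrank_euclideanSpace (𝕜 := ℂ) (ι := κ))
  have hba₀ : b a₀ = ψ' := hb a₀ rfl
  set B : κ → κ → ℂ := fun a c => (WithLp.equiv 2 (κ → ℂ)) (b a) c with hB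
  have happ : ∀ a c, B a c = b a c := fun a c => rfl
  have hB1 : ∀ a a', ∑ cc : κ, (starRingEnd ℂ) (B a cc) * B a' cc
      = if a = a' then 1 else 0 := by
    intro a a'
    have := orthonormal_iff_ite.mp b.orthonormal a a'
    rw [← this, PiLp.inner_apply]
    refine Finset.sum_congr rfl (fun cc _ => ?_)
    rw [RCLike.inner_apply]
    simp only [happ]; ring
  refine ⟨B, ?_, hB1, ?_⟩
  · funext c
    rw [happ, hba₀, hψapp]
  · -- completeness via matrix unitarity
    have hB1' : ∀ a a', ∑ cc : κ, B a cc * (starRingEnd ℂ) (B a' cc)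
        = if a = a' then 1 else 0 := by
      intro a a'
      have h2 := congrArg (starRingEnd ℂ) (hB1 a a')
      rw [_root_.map_sum] at h2
      simp only [_root_.map_mul, Complex.conj_conj] at h2
      rw [h2]
      by_cases h : a = a' <;> simp [h]
    set U : Matrix κ κ ℂ := Matrix.of B with hU
    have hUU : U * U.conjTranspose = 1 := by
      ext a a'
      rw [Matrix.mul_apply, Matrix.one_apply]
      calc ∑ cc, U a cc * U.conjTranspose cc a'
          = ∑ cc : κ, B a cc * (starRingEnd ℂ) (B a' cc) := by
            refine Finset.sum_congr rfl (fun cc _ => ?_)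
            rw [Matrix.conjTranspose_apply]
            rfl
        _ = if a = a' then 1 else 0 := hB1' a a'
    have hUU' : U.conjTranspose * U = 1 := mul_eq_one_comm.mp hUU
    intro c c'
    have h1 : ∑ a : κ, (starRingEnd ℂ) (B a c) * B a c' = if c = c' then 1 else 0 := by
      have := congrFun (congrFun hUU' c) c'
      rw [Matrix.mul_apply, Matrix.one_apply] at this
      rw [← this]
      refine Finset.sum_congr rfl (fun a _ => ?_)
      rw [Matrix.conjTranspose_apply]
      rfl
    have := congrArg (starRingEnd ℂ) h1
    rw [_root_.map_sum] at this
    simp only [_root_.map_mul, Complex.conj_conj] at this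
    rw [this]
    by_cases h : c = c' <;> simp [h]


lemma xi_diag_eq_zero {n : ℕ} (hn : 2 ≤ n) (x : Fin n → Fin 2)
    (hx : 2 * (∑ i ∈ (univ.filter fun i : Fin n => (i : ℕ) < 2 * (n / 2)), ((x i : ℕ)))
      ≠ 2 * (n / 2)) :
    xi n x x = 0 := by
  classical
  obtain ⟨m', rfl⟩ : ∃ m', n = m' + 1 := ⟨n - 1, by omega⟩
  rcases Nat.even_or_odd (m' + 1) with he | ho
  · -- even case
    have hm : 2 * ((m' + 1) / 2) = m' + 1 := by
      have := Nat.even_iff.mp he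
      omega
    have hJu : (univ.filter fun i : Fin (m' + 1) => (i : ℕ) < 2 * ((m' + 1) / 2)) = univ := by
      ext i
      simp only [mem_filter, mem_univ, true_and, iff_true]
      rw [hm]
      exact i.isLt
    rw [hJu] at hx
    show xi (m' + 1) x x = 0
    rw [show xi (m' + 1) = xiEven (m' + 1) from if_pos he]
    unfold xiEven
    rw [Matrix.diagonal_apply_eq]
    rw [if_neg (by intro h; apply hx; omega)]
  · -- odd case
    have hm'even : Even m' := by
      rcases ho with ⟨k, hk⟩
      exact ⟨k, by omega⟩
    have hm : 2 * ((m' + 1) / 2) = m' := by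
      have := Nat.even_iff.mp hm'even
      omega
    have hsum : ∑ i : Fin m', ((x i.castSucc : ℕ))
        = ∑ i ∈ (univ.filter fun i : Fin (m' + 1) => (i : ℕ) < 2 * ((m' + 1) / 2)),
            ((x i : ℕ)) := by
      apply Finset.sum_bij (fun (i : Fin m') _ => Fin.castSucc i)
      · intro i _
        simp only [mem_filter, mem_univ, true_and]
        rw [hm]
        simpa using i.isLt
      · intro i _ j _ hij
        exact Fin.castSucc_injective m' hij
      · intro j hj
        simp only [mem_filter, mem_univ, true_and, hm] at hj
        exact ⟨⟨(j : ℕ), hj⟩, mem_univ _, by apply Fin.ext; simp⟩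
      · intro i _
        rfl
    show xi (m' + 1) x x = 0
    rw [show xi (m' + 1) = fun a b => xiEven m' (fun i => a i.castSucc) (fun i => b i.castSucc) *
      ((2 : ℂ))⁻¹ * (if a (Fin.last m') = b (Fin.last m') then 1 else 0)
      from if_neg (Nat.not_even_iff_odd.mpr ho)]
    simp only
    unfold xiEven
    rw [Matrix.diagonal_apply_eq]
    beta_reduce
    rw [if_neg (by intro h; apply hx; omega)]
    simp


section Core
variable {κ : Type*} [Fintype κ] [DecidableEq κ] {n r : ℕ}

lemma core (a₀ : κ) (J : Finset (Fin n)) (hJ : 2 * r < J.card)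
    (c : κ → ℂ) (hc0 : c a₀ = 0) (hc1 : ∑ a : κ, Complex.normSq (c a) = 1)
    (Z : κ → κ → ℂ) (hZc : ∀ a, Z a a₀ = c a)
    (v : (Fin n → κ) → ℂ)
    (hsupp : ∀ s, r < wt a₀ s → v s = 0)
    (hnz : v ≠ 0)
    (hM : ∀ s : Fin n → κ, ∑ i ∈ J, ∑ a : κ, Z (s i) a * v (Function.update s i a) = 0) :
    False := by
  classical
  obtain ⟨s₀, hs₀⟩ := Function.ne_iff.mp hnz
  have hs₀' : v s₀ ≠ 0 := by simpa using hs₀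
  set T : Finset (Fin n → κ) := univ.filter (fun s => v s ≠ 0) with hT
  have hTne : T.Nonempty := ⟨s₀, by simp [hT, hs₀']⟩
  obtain ⟨s₁, hs₁T, hs₁max⟩ := T.exists_max_image (fun s => wt a₀ s) hTne
  have hv₁ : v s₁ ≠ 0 := by simpa [hT] using hs₁T
  set k := wt a₀ s₁ with hk
  have hkr : k ≤ r := by
    by_contra h
    exact hv₁ (hsupp s₁ (lt_of_not_ge h))
  have htop : ∀ s, k < wt a₀ s → v s = 0 := by
    intro s h
    by_contra hvs
    exact absurd (hs₁max s (by simp [hT, hvs])) (not_le.mpr h)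
  set w : (Fin n → κ) → ℂ := fun t => if wt a₀ t = k then v t else 0 with hw
  have hwsupp : ∀ t, w t ≠ 0 → wt a₀ t = k := by
    intro t
    by_cases h : wt a₀ t = k <;> simp [hw, h]
  set S : ℝ := ∑ t, Complex.normSq (w t) with hS
  have hSpos : 0 < S := by
    have h1 : Complex.normSq (w s₁) = Complex.normSq (v s₁) := by simp [hw, hk]
    have h2 : 0 < Complex.normSq (w s₁) := by
      rw [h1]; exact Complex.normSq_pos.mpr hv₁
    calc (0:ℝ) < Complex.normSq (w s₁) := h2
    _ ≤ S := Finset.single_le_sum (f := fun t => Complex.normSq (w t))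
        (fun t _ => Complex.normSq_nonneg _) (mem_univ s₁)
  set f : (Fin n → κ) → Fin n → ℂ :=
    fun s i => if s i ≠ a₀ then c (s i) * w (Function.update s i a₀) else 0 with hf
  -- Step A : the linear relations
  have hrel : ∀ s, ∑ i ∈ J, f s i = 0 := by
    intro s
    by_cases hws : wt a₀ s = k + 1
    · rw [← hM s]
      refine Finset.sum_congr rfl (fun i _ => ?_)
      by_cases hsi : s i = a₀
      · have hz : ∀ a : κ, v (Function.update s i a) = 0 := by
          intro a
          by_cases ha : a = a₀
          · rw [ha]
            have he : Function.update s i a₀ = s := by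
              rw [← hsi]; exact Function.update_eq_self i s
            rw [he]; exact htop s (by omega)
          · exact htop _ (by rw [wt_update_of_eq ha hsi]; omega)
        simp [hf, hsi, hz]
      · have hsum : ∑ a : κ, Z (s i) a * v (Function.update s i a)
            = Z (s i) a₀ * v (Function.update s i a₀) := by
          apply Finset.sum_eq_single a₀
          · intro a _ ha
            have : v (Function.update s i a) = 0 :=
              htop _ (by rw [wt_update_ne ha hsi]; omega)
            simp [this]
          · simp
        have hwt' : wt a₀ (Function.update s i a₀) = k := by
          have := wt_update_a₀ (a₀ := a₀) (s := s) (i := i) hsi; omega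
        have hww : w (Function.update s i a₀) = v (Function.update s i a₀) := by
          simp [hw, hwt']
        simp only [hf, hsi, if_true, ne_eq, not_false_eq_true, hww]
        rw [hsum, hZc]
    · apply Finset.sum_eq_zero; intro i _
      by_cases hsi : s i = a₀
      · simp [hf, hsi]
      · have h1 : wt a₀ (Function.update s i a₀) ≠ k := by
          have := wt_update_a₀ (a₀ := a₀) (s := s) (i := i) hsi; omega
        have : w (Function.update s i a₀) = 0 := by simp [hw, h1]
        simp [hf, this]
  -- the vanishing total square
  have hSig : (∑ s : Fin n → κ,
      (∑ i ∈ J, f s i) * (starRingEnd ℂ) (∑ j ∈ J, f s j)) = 0 := by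
    apply Finset.sum_eq_zero; intro s _; rw [hrel s]; simp
  -- expansion into diagonal and cross parts
  have hexp : ∀ s : Fin n → κ, (∑ i ∈ J, f s i) * (starRingEnd ℂ) (∑ j ∈ J, f s j)
      = (∑ i ∈ J, f s i * (starRingEnd ℂ) (f s i))
        + ∑ i ∈ J, ∑ j ∈ J.erase i, f s i * (starRingEnd ℂ) (f s j) := by
    intro s
    rw [_root_.map_sum, Finset.sum_mul_sum, ← Finset.sum_add_distrib]
    refine Finset.sum_congr rfl (fun i hi => ?_)
    exact (Finset.add_sum_erase J (fun j => f s i * (starRingEnd ℂ) (f s j)) hi).symm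

  -- `hexp` generalized form for any family
  have hexpg : ∀ (g : Fin n → ℂ), (∑ i ∈ J, g i) * (starRingEnd ℂ) (∑ j ∈ J, g j)
      = (∑ i ∈ J, g i * (starRingEnd ℂ) (g i))
        + ∑ i ∈ J, ∑ j ∈ J.erase i, g i * (starRingEnd ℂ) (g j) := by
    intro g
    rw [_root_.map_sum, Finset.sum_mul_sum, ← Finset.sum_add_distrib]
    refine Finset.sum_congr rfl (fun i hi => ?_)
    exact (Finset.add_sum_erase J (fun j => g i * (starRingEnd ℂ) (g j)) hi).symm
  -- sum of |c|^2 away from a₀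
  have hcsum' : ∑ a : κ, (if a ≠ a₀ then Complex.normSq (c a) else 0) = 1 := by
    have h1 : ∀ a : κ, (if a ≠ a₀ then Complex.normSq (c a) else 0)
        = Complex.normSq (c a) - (if a = a₀ then Complex.normSq (c a) else 0) := by
      intro a; by_cases h : a = a₀ <;> simp [h]
    rw [Finset.sum_congr rfl (fun a _ => h1 a), Finset.sum_sub_distrib, hc1,
        Finset.sum_ite_eq' Finset.univ a₀ (fun a => Complex.normSq (c a))]
    simp [hc0]
  -- Diagonal part: per site computation
  have hdiagi : ∀ i : Fin n, ∑ s : Fin n → κ, Complex.normSq (f s i)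
      = ∑ t : Fin n → κ, (if t i = a₀ then Complex.normSq (w t) else 0) := by
    intro i
    have h1 : ∀ s : Fin n → κ, Complex.normSq (f s i)
        = (fun (t : Fin n → κ) (a : κ) =>
            if a ≠ a₀ then Complex.normSq (c a) * Complex.normSq (w t) else 0)
          (Function.update s i a₀) (s i) := by
      intro s; simp only [hf]
      by_cases hsi : s i = a₀ <;> simp [hsi, Complex.normSq_mul]
    rw [Finset.sum_congr rfl (fun s _ => h1 s),
        sum_update_eq' a₀ i (fun t a =>
          if a ≠ a₀ then Complex.normSq (c a) * Complex.normSq (w t) else 0)]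
    refine Finset.sum_congr rfl (fun t _ => ?_)
    by_cases ht : t i = a₀
    · simp only [ht, if_true]
      have h2 : ∀ a : κ, (if a ≠ a₀ then Complex.normSq (c a) * Complex.normSq (w t) else 0)
          = (if a ≠ a₀ then Complex.normSq (c a) else 0) * Complex.normSq (w t) := by
        intro a; by_cases h : a = a₀ <;> simp [h]
      rw [Finset.sum_congr rfl (fun a _ => h2 a), ← Finset.sum_mul, hcsum', one_mul]
    · simp [ht]
  -- Diagonal lower bound
  have hA : ((J.card : ℝ) - k) * S ≤ ∑ i ∈ J, ∑ s : Fin n → κ, Complex.normSq (f s i) := by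
    have h2 : ∑ i ∈ J, ∑ s : Fin n → κ, Complex.normSq (f s i)
        = ∑ t : Fin n → κ, ((J.filter fun i => t i = a₀).card : ℝ) * Complex.normSq (w t) := by
      rw [Finset.sum_congr rfl (fun i _ => hdiagi i), Finset.sum_comm]
      refine Finset.sum_congr rfl (fun t _ => ?_)
      rw [Finset.sum_ite, Finset.sum_const, Finset.sum_const_zero, add_zero, nsmul_eq_mul]
    rw [h2, hS, Finset.mul_sum]
    apply Finset.sum_le_sum
    intro t _
    by_cases hwt : Complex.normSq (w t) = 0
    · simp [hwt]
    · have hwtk : wt a₀ t = k := by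
        apply hwsupp t
        intro h0
        exact hwt (by rw [h0]; simp)
      have hfle : (J.filter fun i => ¬ (t i = a₀)).card ≤ k := by
        rw [← hwtk]
        have : (J.filter fun i => ¬ (t i = a₀)) = (J.filter fun i => t i ≠ a₀) := by
          simp [ne_eq]
        rw [this]
        exact filter_card_le_wt a₀ J t
      have hsum2 : (J.filter fun i => t i = a₀).card
          + (J.filter fun i => ¬ (t i = a₀)).card = J.card :=
        Finset.card_filter_add_card_filter_not (fun i => t i = a₀)
      have hnat : J.card ≤ (J.filter fun i => t i = a₀).card + k := by omega
      have hreal : ((J.card : ℝ)) - k ≤ ((J.filter fun i => t i = a₀).card : ℝ) := by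
        have := (Nat.cast_le (α := ℝ)).mpr hnat
        push_cast at this ⊢
        linarith
      exact mul_le_mul_of_nonneg_right hreal (Complex.normSq_nonneg _)
  -- Cross part setup
  set A2 : (Fin n → κ) → Fin n → ℂ := fun u i =>
    ∑ a : κ, (if a ≠ a₀ then c a * (starRingEnd ℂ) (w (Function.update u i a)) else 0) with hA2
  set h2 : (Fin n → κ) → Fin n → ℂ := fun u i => if u i = a₀ then A2 u i else 0 with hh2
  have hXij : ∀ i ∈ J, ∀ j ∈ J.erase i,
      ∑ s : Fin n → κ, f s i * (starRingEnd ℂ) (f s j)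
        = ∑ u : Fin n → κ, h2 u i * (starRingEnd ℂ) (h2 u j) := by
    intro i hi j hj
    have hij : i ≠ j := (Finset.ne_of_mem_erase hj).symm
    set G2 : (Fin n → κ) → κ → κ → ℂ := fun u a a' =>
      if a ≠ a₀ ∧ a' ≠ a₀ then
        (c a * (starRingEnd ℂ) (w (Function.update u i a))) *
        ((starRingEnd ℂ) (c a') * w (Function.update u j a')) else 0 with hG2
    have h1 : ∀ s : Fin n → κ, f s i * (starRingEnd ℂ) (f s j)
        = G2 (Function.update (Function.update s i a₀) j a₀) (s i) (s j) := by
      intro s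
      have e1 : Function.update (Function.update (Function.update s i a₀) j a₀) j (s j)
          = Function.update s i a₀ := by
        rw [Function.update_idem]
        have hsj : s j = (Function.update s i a₀) j := (Function.update_of_ne hij.symm a₀ s).symm
        rw [hsj, Function.update_eq_self]
      have e2 : Function.update (Function.update (Function.update s i a₀) j a₀) i (s i)
          = Function.update s j a₀ := by
        rw [Function.update_comm hij, Function.update_idem]
        have hsi : s i = (Function.update s j a₀) i := (Function.update_of_ne hij a₀ s).symm
        rw [hsi, Function.update_eq_self]
      simp only [hf, hG2, e1, e2]
      by_cases hsi : s i = a₀ <;> by_cases hsj : s j = a₀ <;>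
        simp [hsi, hsj, _root_.map_mul] <;> ring
    rw [Finset.sum_congr rfl (fun s _ => h1 s), sum_update2_eq a₀ i j hij G2]
    refine Finset.sum_congr rfl (fun u _ => ?_)
    have hprod : ∑ a : κ, ∑ a' : κ, G2 u a a' = A2 u i * (starRingEnd ℂ) (A2 u j) := by
      simp only [hA2, _root_.map_sum]
      rw [Finset.sum_mul_sum]
      refine Finset.sum_congr rfl (fun a _ => Finset.sum_congr rfl (fun a' _ => ?_))
      by_cases ha : a = a₀ <;> by_cases ha' : a' = a₀ <;>
        simp [hG2, ha, ha', _root_.map_mul] <;> ring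
    by_cases h1' : u i = a₀ <;> by_cases h2' : u j = a₀ <;>
      simp [hh2, h1', h2', hprod]
  -- per-u lower bound for the cross sum
  have hubB : ∀ u : Fin n → κ,
      - ∑ i ∈ J, Complex.normSq (h2 u i)
        ≤ ∑ i ∈ J, ∑ j ∈ J.erase i, (h2 u i * (starRingEnd ℂ) (h2 u j)).re := by
    intro u
    have hid := hexpg (fun i => h2 u i)
    have hre := congrArg Complex.re hid
    simp only [Complex.add_re, Complex.re_sum] at hre
    have e3 : ∀ i ∈ J, (h2 u i * (starRingEnd ℂ) (h2 u i)).re = Complex.normSq (h2 u i) := by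
      intro i _; rw [Complex.mul_conj]; simp
    rw [Finset.sum_congr rfl e3] at hre
    have e4 : ((∑ i ∈ J, h2 u i) * (starRingEnd ℂ) (∑ j ∈ J, h2 u j)).re
        = Complex.normSq (∑ i ∈ J, h2 u i) := by rw [Complex.mul_conj]; simp
    rw [e4] at hre
    have e5 : (0:ℝ) ≤ Complex.normSq (∑ i ∈ J, h2 u i) := Complex.normSq_nonneg _
    linarith
  -- Cauchy-Schwarz bound on h2
  have hCS : ∀ (u : Fin n → κ) (i : Fin n), Complex.normSq (h2 u i)
      ≤ (if u i = a₀ then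
          ∑ a : κ, (if a ≠ a₀ then Complex.normSq (w (Function.update u i a)) else 0) else 0) := by
    intro u i
    by_cases hui : u i = a₀
    · simp only [hh2, hui, if_true]
      set P : Finset κ := univ.filter (fun a => a ≠ a₀) with hP
      have e1 : A2 u i = ∑ a ∈ P, c a * (starRingEnd ℂ) (w (Function.update u i a)) := by
        rw [hA2, hP, Finset.sum_filter]
      have habs : ‖A2 u i‖
          ≤ ∑ a ∈ P, ‖c a‖ * ‖w (Function.update u i a)‖ := by
        rw [e1]
        refine le_trans (norm_sum_le P _) (le_of_eq ?_)
        refine Finset.sum_congr rfl (fun a _ => ?_)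
        simp
      have hsq : Complex.normSq (A2 u i)
          ≤ (∑ a ∈ P, ‖c a‖ * ‖w (Function.update u i a)‖)^2 := by
        rw [← Complex.sq_norm]
        exact pow_le_pow_left₀ (norm_nonneg _) habs 2
      have hcs2 : (∑ a ∈ P, ‖c a‖ * ‖w (Function.update u i a)‖)^2
          ≤ (∑ a ∈ P, ‖c a‖^2)
            * (∑ a ∈ P, ‖w (Function.update u i a)‖^2) :=
        Finset.sum_mul_sq_le_sq_mul_sq P _ _
      have hc1' : (∑ a ∈ P, ‖c a‖^2) = 1 := by
        rw [← hcsum', hP, Finset.sum_filter]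
        refine Finset.sum_congr rfl (fun a _ => ?_)
        by_cases h : a = a₀ <;> simp [h, Complex.sq_norm]
      have e2 : (∑ a ∈ P, ‖w (Function.update u i a)‖^2)
          = ∑ a : κ, (if a ≠ a₀ then Complex.normSq (w (Function.update u i a)) else 0) := by
        rw [hP, Finset.sum_filter]
        refine Finset.sum_congr rfl (fun a _ => ?_)
        by_cases h : a = a₀ <;> simp [h, Complex.sq_norm]
      calc Complex.normSq (A2 u i)
          ≤ (∑ a ∈ P, ‖c a‖ * ‖w (Function.update u i a)‖)^2 := hsq
        _ ≤ (∑ a ∈ P, ‖c a‖^2)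
            * (∑ a ∈ P, ‖w (Function.update u i a)‖^2) := hcs2
        _ = ∑ a : κ, (if a ≠ a₀ then Complex.normSq (w (Function.update u i a)) else 0) := by
            rw [hc1', one_mul, e2]
    · simp [hh2, hui]
  -- total bound on the h2 mass
  have hB2 : ∑ u : Fin n → κ, ∑ i ∈ J, Complex.normSq (h2 u i) ≤ (k : ℝ) * S := by
    have step1 : ∑ u : Fin n → κ, ∑ i ∈ J, Complex.normSq (h2 u i)
        ≤ ∑ u : Fin n → κ, ∑ i ∈ J, (if u i = a₀ then
            ∑ a : κ, (if a ≠ a₀ then Complex.normSq (w (Function.update u i a)) else 0) else 0) :=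
      Finset.sum_le_sum (fun u _ => Finset.sum_le_sum (fun i _ => hCS u i))
    have step2 : ∀ i : Fin n, ∑ u : Fin n → κ, (if u i = a₀ then
            ∑ a : κ, (if a ≠ a₀ then Complex.normSq (w (Function.update u i a)) else 0) else 0)
        = ∑ s : Fin n → κ, (if s i ≠ a₀ then Complex.normSq (w s) else 0) := by
      intro i
      rw [← sum_update_eq' a₀ i (fun t a =>
        if a ≠ a₀ then Complex.normSq (w (Function.update t i a)) else 0)]
      refine Finset.sum_congr rfl (fun s _ => ?_)
      by_cases hsi : s i = a₀
      · simp [hsi]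
      · have e6 : Function.update (Function.update s i a₀) i (s i) = s := by
          rw [Function.update_idem, Function.update_eq_self]
        simp [hsi, e6]
    have step3 : ∑ i ∈ J, ∑ s : Fin n → κ, (if s i ≠ a₀ then Complex.normSq (w s) else 0)
        ≤ (k : ℝ) * S := by
      rw [Finset.sum_comm]
      have e7 : ∀ s : Fin n → κ, ∑ i ∈ J, (if s i ≠ a₀ then Complex.normSq (w s) else 0)
          = ((J.filter fun i => s i ≠ a₀).card : ℝ) * Complex.normSq (w s) := by
        intro s
        rw [Finset.sum_ite, Finset.sum_const, Finset.sum_const_zero, add_zero, nsmul_eq_mul]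
      rw [Finset.sum_congr rfl (fun s _ => e7 s), hS, Finset.mul_sum]
      apply Finset.sum_le_sum
      intro s _
      by_cases hws : Complex.normSq (w s) = 0
      · simp [hws]
      · have hwtk : wt a₀ s = k := by
          apply hwsupp s
          intro h0
          exact hws (by rw [h0]; simp)
        have : (J.filter fun i => s i ≠ a₀).card ≤ k := by
          rw [← hwtk]; exact filter_card_le_wt a₀ J s
        exact mul_le_mul_of_nonneg_right (by exact_mod_cast this) (Complex.normSq_nonneg _)
    calc ∑ u : Fin n → κ, ∑ i ∈ J, Complex.normSq (h2 u i)
        ≤ ∑ u : Fin n → κ, ∑ i ∈ J, (if u i = a₀ then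
            ∑ a : κ, (if a ≠ a₀ then Complex.normSq (w (Function.update u i a)) else 0) else 0) := step1
      _ = ∑ i ∈ J, ∑ u : Fin n → κ, (if u i = a₀ then
            ∑ a : κ, (if a ≠ a₀ then Complex.normSq (w (Function.update u i a)) else 0) else 0) :=
          Finset.sum_comm
      _ = ∑ i ∈ J, ∑ s : Fin n → κ, (if s i ≠ a₀ then Complex.normSq (w s) else 0) :=
          Finset.sum_congr rfl (fun i _ => step2 i)
      _ ≤ (k : ℝ) * S := step3
  -- Final assembly
  have hzero : (0:ℝ) = (∑ s : Fin n → κ,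
      (∑ i ∈ J, f s i) * (starRingEnd ℂ) (∑ j ∈ J, f s j)).re := by
    rw [hSig]; simp
  have hsplit : (∑ s : Fin n → κ,
      (∑ i ∈ J, f s i) * (starRingEnd ℂ) (∑ j ∈ J, f s j)).re
      = (∑ s : Fin n → κ, ∑ i ∈ J, Complex.normSq (f s i))
        + ∑ s : Fin n → κ, ∑ i ∈ J, ∑ j ∈ J.erase i, (f s i * (starRingEnd ℂ) (f s j)).re := by
    rw [Complex.re_sum, ← Finset.sum_add_distrib]
    refine Finset.sum_congr rfl (fun s _ => ?_)
    rw [hexpg (fun i => f s i)]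
    simp only [Complex.add_re, Complex.re_sum]
    congr 1
    refine Finset.sum_congr rfl (fun i _ => ?_)
    rw [Complex.mul_conj]; simp
  have hBeq : ∑ s : Fin n → κ, ∑ i ∈ J, ∑ j ∈ J.erase i, (f s i * (starRingEnd ℂ) (f s j)).re
      = ∑ u : Fin n → κ, ∑ i ∈ J, ∑ j ∈ J.erase i, (h2 u i * (starRingEnd ℂ) (h2 u j)).re := by
    rw [Finset.sum_comm]
    conv_rhs => rw [Finset.sum_comm]
    refine Finset.sum_congr rfl (fun i hi => ?_)
    rw [Finset.sum_comm]
    conv_rhs => rw [Finset.sum_comm]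
    refine Finset.sum_congr rfl (fun j hj => ?_)
    rw [← Complex.re_sum, ← Complex.re_sum, hXij i hi j hj]
  have hAcomm : ∑ s : Fin n → κ, ∑ i ∈ J, Complex.normSq (f s i)
      = ∑ i ∈ J, ∑ s : Fin n → κ, Complex.normSq (f s i) := Finset.sum_comm
  have hBlow : - ((k:ℝ) * S)
      ≤ ∑ u : Fin n → κ, ∑ i ∈ J, ∑ j ∈ J.erase i, (h2 u i * (starRingEnd ℂ) (h2 u j)).re := by
    have := Finset.sum_le_sum (fun u (_ : u ∈ (univ : Finset (Fin n → κ))) => hubB u)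
    calc - ((k:ℝ) * S) ≤ - ∑ u : Fin n → κ, ∑ i ∈ J, Complex.normSq (h2 u i) := by linarith [hB2]
    _ ≤ _ := by
        rw [← Finset.sum_neg_distrib]
        exact this
  have hks : 2 * (k:ℝ) < (J.card : ℝ) := by
    have : 2 * k < J.card := by omega
    exact_mod_cast this
  have hge : ((J.card : ℝ) - k) * S - (k:ℝ) * S ≤ (0:ℝ) := by
    rw [hzero, hsplit, hAcomm, hBeq]
    linarith [hA, hBlow]
  nlinarith [hSpos, hks, hge]

end Core

end AuxiliaryLemmas

/-- For every `n ≥ 2` and every `1 ≤ r ≤ (n−1)/4`, the state `ξₙ` is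
not a `binom(n,r)`-almost i.i.d. (MSR almost i.i.d.) state in `τ = 𝟙₂/2`. -/
theorem xi_not_MSR
    (n r : ℕ) (hn : 2 ≤ n) (hr1 : 1 ≤ r) (hr : 4 * r ≤ n - 1) (hrn : r ≤ n) :
    ¬ IsMSR n r hrn (((2 : ℂ))⁻¹ • (1 : Matrix (Fin 2) (Fin 2) ℂ)) (xi n) := by
  rintro ⟨dE, ψ, hψnorm, hred, Ω, ⟨hpsd, htr⟩, hξ, hpermx, hrange⟩
  classical
  have hcm : ∀ t : ℂ, (starRingEnd ℂ) t * t = ((Complex.normSq t : ℝ) : ℂ) := by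
    intro t; rw [mul_comm]; exact Complex.mul_conj t
  -- the environment is nonempty
  have hdE : 0 < dE := by
    by_contra h
    have h0 : dE = 0 := by omega
    subst h0
    rw [Finset.univ_eq_empty, Finset.sum_empty] at hψnorm
    exact one_ne_zero hψnorm.symm
  set a₀ : Fin 2 × Fin dE := (0, ⟨0, hdE⟩) with ha₀
  haveI : Nonempty (Fin 2 × Fin dE) := ⟨a₀⟩
  obtain ⟨B, hBa₀, hB1, hB2⟩ := exists_onb ψ hψnorm a₀
  -- reduced state diagonal entries
  have hred00 : ∑ e : Fin dE, ψ (0, e) * (starRingEnd ℂ) (ψ (0, e)) = 2⁻¹ := by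
    have h := congrFun (congrFun hred 0) 0
    simp only [Matrix.smul_apply, Matrix.one_apply_eq, smul_eq_mul, mul_one] at h
    exact h.symm
  have hred11 : ∑ e : Fin dE, ψ (1, e) * (starRingEnd ℂ) (ψ (1, e)) = 2⁻¹ := by
    have h := congrFun (congrFun hred 1) 1
    simp only [Matrix.smul_apply, Matrix.one_apply_eq, smul_eq_mul, mul_one] at h
    exact h.symm
  -- the single site observable
  set z : Fin 2 × Fin dE → ℂ := fun c => if c.1 = (0 : Fin 2) then 1 else -1 with hz
  set Zh : (Fin 2 × Fin dE) → (Fin 2 × Fin dE) → ℂ :=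
    fun a a' => ∑ cc, (starRingEnd ℂ) (B a cc) * z cc * B a' cc with hZh
  have hc0 : Zh a₀ a₀ = 0 := by
    simp only [hZh, hBa₀]
    rw [Fintype.sum_prod_type, Fin.sum_univ_two]
    have h0 : ∀ e : Fin dE, (starRingEnd ℂ) (ψ (0, e)) * z (0, e) * ψ (0, e)
        = ψ (0, e) * (starRingEnd ℂ) (ψ (0, e)) := by
      intro e; simp only [hz]; norm_num; ring
    have h1 : ∀ e : Fin dE, (starRingEnd ℂ) (ψ (1, e)) * z (1, e) * ψ (1, e)
        = -(ψ (1, e) * (starRingEnd ℂ) (ψ (1, e))) := by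
      intro e; simp only [hz]; norm_num; ring
    rw [Finset.sum_congr rfl (fun e _ => h0 e), Finset.sum_congr rfl (fun e _ => h1 e),
        Finset.sum_neg_distrib, hred00, hred11]
    ring
  have hzz : ∀ cc : Fin 2 × Fin dE, (starRingEnd ℂ) (z cc) * z cc = 1 := by
    intro cc; by_cases h : cc.1 = 0 <;> simp [hz, h]
  have hc1 : ∑ a : Fin 2 × Fin dE, Complex.normSq (Zh a a₀) = 1 := by
    have hkey : ∑ a : Fin 2 × Fin dE, ((Complex.normSq (Zh a a₀) : ℝ) : ℂ) = 1 := by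
      have hconj : ∀ a, ((Complex.normSq (Zh a a₀) : ℝ) : ℂ)
          = (starRingEnd ℂ) (Zh a a₀) * Zh a a₀ := by
        intro a; exact (hcm _).symm
      rw [Finset.sum_congr rfl (fun a _ => hconj a)]
      have hexp2 : ∀ a, (starRingEnd ℂ) (Zh a a₀) * Zh a a₀
          = ∑ cc, ∑ cc', ((starRingEnd ℂ) (z cc) * (starRingEnd ℂ) (B a₀ cc)
              * z cc' * B a₀ cc') * (B a cc * (starRingEnd ℂ) (B a cc')) := by
        intro a
        simp only [hZh]
        rw [_root_.map_sum, Finset.sum_mul_sum]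
        refine Finset.sum_congr rfl (fun cc _ => Finset.sum_congr rfl (fun cc' _ => ?_))
        rw [_root_.map_mul, _root_.map_mul, Complex.conj_conj]
        ring
      rw [Finset.sum_congr rfl (fun a _ => hexp2 a), Finset.sum_comm]
      have hswap : ∀ cc, ∑ a : Fin 2 × Fin dE, ∑ cc',
          ((starRingEnd ℂ) (z cc) * (starRingEnd ℂ) (B a₀ cc)
            * z cc' * B a₀ cc') * (B a cc * (starRingEnd ℂ) (B a cc'))
          = (starRingEnd ℂ) (z cc) * (starRingEnd ℂ) (B a₀ cc) * z cc * B a₀ cc := by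
        intro cc
        rw [Finset.sum_comm]
        have h3 : ∀ cc', ∑ a : Fin 2 × Fin dE,
            ((starRingEnd ℂ) (z cc) * (starRingEnd ℂ) (B a₀ cc)
              * z cc' * B a₀ cc') * (B a cc * (starRingEnd ℂ) (B a cc'))
            = if cc = cc' then (starRingEnd ℂ) (z cc) * (starRingEnd ℂ) (B a₀ cc)
                * z cc' * B a₀ cc' else 0 := by
          intro cc'
          rw [← Finset.mul_sum, hB2 cc cc']
          by_cases h : cc = cc' <;> simp [h]
        rw [Finset.sum_congr rfl (fun cc' _ => h3 cc'),
          Finset.sum_ite_eq Finset.univ cc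
            (fun cc' => (starRingEnd ℂ) (z cc) * (starRingEnd ℂ) (B a₀ cc) * z cc' * B a₀ cc')]
        simp
      rw [Finset.sum_congr rfl (fun cc _ => hswap cc)]
      have h4 : ∀ cc, (starRingEnd ℂ) (z cc) * (starRingEnd ℂ) (B a₀ cc) * z cc * B a₀ cc
          = ((Complex.normSq (ψ cc) : ℝ) : ℂ) := by
        intro cc
        rw [hBa₀]
        have := hzz cc
        calc (starRingEnd ℂ) (z cc) * (starRingEnd ℂ) (ψ cc) * z cc * ψ cc
            = ((starRingEnd ℂ) (z cc) * z cc) * ((starRingEnd ℂ) (ψ cc) * ψ cc) := by ring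
          _ = (starRingEnd ℂ) (ψ cc) * ψ cc := by rw [this, one_mul]
          _ = ((Complex.normSq (ψ cc) : ℝ) : ℂ) := hcm _
      rw [Finset.sum_congr rfl (fun cc _ => h4 cc), ← Complex.ofReal_sum, hψnorm]
      simp
    have := hkey
    rw [← Complex.ofReal_sum] at this
    exact_mod_cast this
  -- the constrained coordinate set
  set J : Finset (Fin n) := Finset.univ.filter (fun i : Fin n => (i : ℕ) < 2 * (n / 2)) with hJdef
  have hJcard : J.card = 2 * (n / 2) := fin_filter_lt_card n (2 * (n / 2)) (by omega)
  have hJ : 2 * r < J.card := by rw [hJcard]; omega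
  -- positive semidefinite decomposition
  obtain ⟨C, hC⟩ : ∃ C : Matrix (Fin n → Fin 2 × Fin dE) (Fin n → Fin 2 × Fin dE) ℂ,
      Ω = Cᴴ * C := by
    open scoped MatrixOrder in
    have h0 : 0 ≤ Ω := Matrix.nonneg_iff_posSemidef.mpr hpsd
    open scoped MatrixOrder in
    exact ⟨CFC.sqrt Ω, by rw [← Matrix.star_eq_conjTranspose,
      (CFC.sqrt_nonneg Ω).isSelfAdjoint.star_eq, CFC.sqrt_mul_sqrt_self Ω h0]⟩
  have hD : ∀ p' : Fin n → Fin 2 × Fin dE,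
      Ω p' p' = ((∑ k : Fin n → Fin 2 × Fin dE, Complex.normSq (C k p') : ℝ) : ℂ) := by
    intro p'
    rw [hC, Matrix.mul_apply, Complex.ofReal_sum]
    refine Finset.sum_congr rfl (fun k _ => ?_)
    rw [Matrix.conjTranspose_apply, Complex.star_def, hcm]
  -- columns of Ω vanish off the good set
  have hgood : ∀ p : Fin n → Fin 2 × Fin dE,
      2 * (∑ i ∈ J, (((p i).1 : ℕ))) ≠ 2 * (n / 2) → ∀ q', Ω p q' = 0 := by
    intro p hp q'
    have hx : xi n (fun i => (p i).1) (fun i => (p i).1) = 0 :=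
      xi_diag_eq_zero hn _ (by rw [← hJdef]; exact hp)
    rw [hξ] at hx
    unfold traceOutE at hx
    have hxsum : ∑ e : Fin n → Fin dE, ((∑ k : Fin n → Fin 2 × Fin dE,
        Complex.normSq (C k (fun i => ((p i).1, e i))) : ℝ) : ℂ) = 0 := by
      rw [← hx]
      exact Finset.sum_congr rfl (fun e _ => (hD _).symm)
    rw [← Complex.ofReal_sum] at hxsum
    have hxreal : ∑ e : Fin n → Fin dE, ∑ k : Fin n → Fin 2 × Fin dE,
        Complex.normSq (C k (fun i => ((p i).1, e i))) = 0 := by exact_mod_cast hxsum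
    have hCzero : ∀ k, C k p = 0 := by
      intro k
      have hpe : (fun i => ((p i).1, (fun j => (p j).2) i)) = p := by
        funext i; exact Prod.mk.eta
      have h5 := (Finset.sum_eq_zero_iff_of_nonneg
        (fun e _ => Finset.sum_nonneg (fun k _ => Complex.normSq_nonneg _))).mp hxreal
        (fun j => (p j).2) (Finset.mem_univ _)
      have h6 := (Finset.sum_eq_zero_iff_of_nonneg
        (fun k _ => Complex.normSq_nonneg _)).mp h5 k (Finset.mem_univ _)
      rw [hpe] at h6
      exact Complex.normSq_eq_zero.mp h6
    rw [hC, Matrix.mul_apply]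
    apply Finset.sum_eq_zero
    intro k _
    rw [Matrix.conjTranspose_apply, hCzero k]
    simp
  -- a nonzero column
  have hΩdiag : ∃ p, Ω p p ≠ 0 := by
    by_contra h
    push_neg at h
    rw [Matrix.trace] at htr
    simp only [Matrix.diag] at htr
    rw [Finset.sum_congr rfl (fun p _ => h p), Finset.sum_const, smul_zero] at htr
    exact one_ne_zero htr.symm
  obtain ⟨q, hq⟩ := hΩdiag
  set vcol : (Fin n → Fin 2 × Fin dE) → ℂ := fun p => Ω p q with hvcol
  have hvne : vcol ≠ 0 := by
    intro h
    have h2 := congrFun h q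
    simp only [Pi.zero_apply] at h2
    exact hq h2
  have hvsupp : ∀ p, 2 * (∑ i ∈ J, (((p i).1 : ℕ))) ≠ 2 * (n / 2) → vcol p = 0 :=
    fun p hp => hgood p hp q
  have hvspan : vcol ∈ Submodule.span ℂ (Vset n r hrn ψ) := by
    apply hrange
    refine ⟨Pi.single q 1, ?_⟩
    rw [Matrix.mulVecLin_apply]
    funext p
    simp only [hvcol, Matrix.mulVec, dotProduct, Pi.single_apply]
    rw [Finset.sum_congr rfl (fun j (_ : j ∈ Finset.univ) => by
      rw [mul_ite, mul_one, mul_zero] : ∀ j ∈ Finset.univ,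
        Ω p j * (if j = q then (1:ℂ) else 0) = if j = q then Ω p j else 0)]
    rw [Finset.sum_ite_eq' Finset.univ q (fun j => Ω p j)]
    simp
  -- pointwise observable relation
  have hMpt : ∀ p : Fin n → Fin 2 × Fin dE, (∑ i ∈ J, z (p i)) * vcol p = 0 := by
    intro p
    by_cases hp : 2 * (∑ i ∈ J, (((p i).1 : ℕ))) = 2 * (n / 2)
    · have hzsum : ∑ i ∈ J, z (p i) = 0 := by
        have hterm : ∀ i ∈ J, z (p i) = 1 - 2 * ((((p i).1 : ℕ) : ℕ) : ℂ) := by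
          intro i _
          by_cases h : (p i).1 = 0
          · simp [hz, h]
          · have h1 : (p i).1 = 1 := by omega
            rw [hz]
            simp only [h, if_neg h, h1]
            norm_num
        rw [Finset.sum_congr rfl hterm, Finset.sum_sub_distrib, Finset.sum_const,
          ← Finset.mul_sum]
        have hcast : (∑ i ∈ J, ((((p i).1 : ℕ) : ℕ) : ℂ)) = ((∑ i ∈ J, ((p i).1 : ℕ) : ℕ) : ℂ) := by
          push_cast
          rfl
        rw [hcast]
        have : ((J.card : ℕ) : ℂ) = ((2 * (∑ i ∈ J, ((p i).1 : ℕ)) : ℕ) : ℂ) := by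
          rw [hJcard, ← hp]
        push_cast at this ⊢
        rw [nsmul_eq_mul]
        push_cast
        linear_combination this
      rw [hzsum, zero_mul]
    · rw [hvsupp p hp, mul_zero]
  -- hat coefficients
  set vh : (Fin n → Fin 2 × Fin dE) → ℂ :=
    fun s => ∑ x, (∏ i, (starRingEnd ℂ) (B (s i) (x i))) * vcol x with hvh
  have hvhsupp : ∀ s, r < wt a₀ s → vh s = 0 :=
    fun s hs => hat_span_support hrn ψ B a₀ hBa₀ hB1 vcol hvspan s hs
  have hvhnz : vh ≠ 0 := by
    intro h0
    apply hvne
    funext x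
    simp only [Pi.zero_apply]
    rw [← hat_inversion B hB2 vcol x]
    apply Finset.sum_eq_zero
    intro s _
    have hs0 := congrFun h0 s
    simp only [hvh, Pi.zero_apply] at hs0
    rw [hs0, mul_zero]
  have hM : ∀ s : Fin n → Fin 2 × Fin dE,
      ∑ i ∈ J, ∑ a : Fin 2 × Fin dE, Zh (s i) a * vh (Function.update s i a) = 0 := by
    intro s
    simp only [hZh, hvh]
    rw [hat_mult B hB2 z J vcol s]
    apply Finset.sum_eq_zero
    intro x _
    rw [hMpt x, mul_zero]
  exact core a₀ J hJ (fun a => Zh a a₀) hc0 hc1 Zh (fun a => rfl) vh hvhsupp hvhnz hM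

end AlmostIID
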